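/- Under Assumptions of a connected server graph and bounded client gradients (‖∇f^{ij}(w)‖ ≤ θ for all w), the DFL algorithm satisfies, for every server i and every epoch p: ‖w^i_p - w̄_p‖ ≤ σ_A^p ‖W_0 - 1 w̄'_0‖ + √M T_C θ γ σ_A/(1 - σ_A), where σ_A = ‖A^{T_S} - (1/M)11'‖ < 1 and w̄_p is the average of the M server models. -/

import Mathlib

/-- Spectral norm of a matrix. -/
noncomputable def specNorm {m n : ℕ} (A : Matrix (Fin m) (Fin n) ℝ) : ℝ :=
  ‖LinearMap.toContinuousLinearMap (Matrix.toEuclideanLin A)‖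

/-- The `i`-th row of a matrix as a vector of Euclidean space. -/
noncomputable def mrow {m n : ℕ} (A : Matrix (Fin m) (Fin n) ℝ) (i : Fin m) :
    EuclideanSpace ℝ (Fin n) := (WithLp.equiv 2 (Fin n → ℝ)).symm (A i)

open Matrix
open scoped RealInnerProductSpace
open scoped Matrix.Norms.L2Operator

lemma specNorm_eq {m n : ℕ} (A : Matrix (Fin m) (Fin n) ℝ) : specNorm A = ‖A‖ := rfl

lemma mrow_le_specNorm {m n : ℕ} (B : Matrix (Fin m) (Fin n) ℝ) (i : Fin m) :
    ‖mrow B i‖ ≤ specNorm B := by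
  have h1 : B i = Bᵀ *ᵥ Pi.single i 1 := by
    funext k
    simp [Matrix.mulVec, dotProduct, Pi.single_apply]
  have h2 : ‖(WithLp.equiv 2 (Fin n → ℝ)).symm (Bᵀ *ᵥ Pi.single i 1)‖ ≤
      ‖Bᵀ‖ * ‖(WithLp.equiv 2 (Fin m → ℝ)).symm (Pi.single i 1 : Fin m → ℝ)‖ :=
    Matrix.l2_opNorm_mulVec Bᵀ ((WithLp.equiv 2 (Fin m → ℝ)).symm (Pi.single i 1 : Fin m → ℝ))
  have h3 : (WithLp.equiv 2 (Fin m → ℝ)).symm (Pi.single i 1 : Fin m → ℝ) =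
      EuclideanSpace.single i (1:ℝ) := rfl
  have h4 : ‖Bᵀ‖ = ‖B‖ := by
    rw [← Matrix.l2_opNorm_conjTranspose B]
    congr 1
  rw [specNorm_eq, mrow, h1]
  calc ‖(WithLp.equiv 2 (Fin n → ℝ)).symm (Bᵀ *ᵥ Pi.single i 1)‖ ≤ _ := h2
    _ = ‖B‖ := by rw [h3, EuclideanSpace.norm_single, h4]; simp

lemma specNorm_le_of_rows {m n : ℕ} (B : Matrix (Fin m) (Fin n) ℝ) (c : ℝ) (hc : 0 ≤ c)
    (h : ∀ i, ‖mrow B i‖ ≤ c) : specNorm B ≤ Real.sqrt m * c := by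
  rw [specNorm]
  apply ContinuousLinearMap.opNorm_le_bound
  · positivity
  intro x
  simp only [LinearMap.coe_toContinuousLinearMap']
  rw [Matrix.toEuclideanLin_apply]
  have key : ∀ i : Fin m, |(B *ᵥ (WithLp.equiv 2 (Fin n → ℝ)) x) i| ≤ c * ‖x‖ := by
    intro i
    have hx : (B *ᵥ (WithLp.equiv 2 (Fin n → ℝ)) x) i = inner (𝕜 := ℝ) (mrow B i) x := by
      simp [Matrix.mulVec, dotProduct, PiLp.inner_apply, mrow, RCLike.inner_apply,
        WithLp.equiv_symm_apply, PiLp.toLp_apply, mul_comm]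
    rw [hx]
    refine (abs_real_inner_le_norm _ _).trans ?_
    gcongr
    exact h i
  rw [EuclideanSpace.norm_eq]
  have hsum : ∑ i : Fin m, ‖(WithLp.equiv 2 (Fin m → ℝ)).symm (B *ᵥ (WithLp.equiv 2 (Fin n → ℝ)) x) i‖ ^ 2
      ≤ ∑ _i : Fin m, (c * ‖x‖) ^ 2 := by
    apply Finset.sum_le_sum
    intro i _
    have h2 : ‖(WithLp.equiv 2 (Fin m → ℝ)).symm (B *ᵥ (WithLp.equiv 2 (Fin n → ℝ)) x) i‖
        = |(B *ᵥ (WithLp.equiv 2 (Fin n → ℝ)) x) i| := by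
      simp [Real.norm_eq_abs]
    rw [h2]
    nlinarith [key i, abs_nonneg ((B *ᵥ (WithLp.equiv 2 (Fin n → ℝ)) x) i), norm_nonneg x]
  calc Real.sqrt (∑ i : Fin m, ‖(WithLp.equiv 2 (Fin m → ℝ)).symm (B *ᵥ (WithLp.equiv 2 (Fin n → ℝ)) x) i‖ ^ 2)
      ≤ Real.sqrt (∑ _i : Fin m, (c * ‖x‖) ^ 2) := Real.sqrt_le_sqrt hsum
    _ = Real.sqrt m * c * ‖x‖ := by
        rw [Finset.sum_const, Finset.card_univ, Fintype.card_fin, nsmul_eq_mul]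
        rw [Real.sqrt_mul (by positivity), Real.sqrt_sq (by positivity)]
        ring

lemma rowsum_pow {M : ℕ} (A : Matrix (Fin M) (Fin M) ℝ) (h : ∀ i, ∑ j, A i j = 1) :
    ∀ k i, ∑ j, (A ^ k) i j = 1 := by
  intro k
  induction k with
  | zero => intro i; simp [Matrix.one_apply]
  | succ k ih =>
    intro i
    rw [pow_succ]
    simp only [Matrix.mul_apply]
    rw [Finset.sum_comm]
    simp_rw [← Finset.mul_sum, h]
    simpa using ih i

lemma colsum_pow {M : ℕ} (A : Matrix (Fin M) (Fin M) ℝ) (h : ∀ j, ∑ i, A i j = 1) :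
    ∀ k j, ∑ i, (A ^ k) i j = 1 := by
  intro k
  induction k with
  | zero => intro j; simp [Matrix.one_apply]
  | succ k ih =>
    intro j
    rw [pow_succ]
    simp only [Matrix.mul_apply]
    rw [Finset.sum_comm]
    simp_rw [← Finset.sum_mul, ih]
    simpa using h j

lemma mrow_sub {m n : ℕ} (X Y : Matrix (Fin m) (Fin n) ℝ) (i : Fin m) :
    mrow (X - Y) i = mrow X i - mrow Y i := by
  rw [mrow, show (X - Y) i = X i - Y i from rfl, WithLp.equiv_symm_apply, WithLp.toLp_sub]
  rfl

lemma equiv_symm_sum {n M : ℕ} (v : Fin M → (Fin n → ℝ)) :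
    (WithLp.equiv 2 (Fin n → ℝ)).symm (∑ k, v k) =
      ∑ k, (WithLp.equiv 2 (Fin n → ℝ)).symm (v k) :=
  map_sum (WithLp.linearEquiv 2 ℝ (Fin n → ℝ)).symm v Finset.univ


open Finset in
/-- Lemma 1 (server-to-average deviation): under the DFL updates with doubly
stochastic consensus matrix `A` (with `σ_A = ‖A^{T_S} - (1/M)11'‖ < 1`, guaranteed
by the connected server graph) and client gradients bounded by `θ`, every server's
model satisfies
`‖w^i_p - w̄_p‖ ≤ σ_A^p ‖W_0 - 1w̄'_0‖ + √M T_C θ γ σ_A/(1 - σ_A)`. -/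
theorem dfl_server_to_average_bound (M N d TC TS : ℕ)
    (hM : 0 < M) (hN : 0 < N) (hTC : 0 < TC) (hTS : 0 < TS)
    (θ γ : ℝ) (hθ : 0 ≤ θ) (hγ : 0 ≤ γ)
    (A : Matrix (Fin M) (Fin M) ℝ)
    (hnn : ∀ i j, 0 ≤ A i j)
    (hrowsum : ∀ i, ∑ j, A i j = 1)
    (hcolsum : ∀ j, ∑ i, A i j = 1)
    -- client gradient fields, bounded by θ
    (f' : Fin M → Fin N → EuclideanSpace ℝ (Fin d) → EuclideanSpace ℝ (Fin d))
    (hgradbd : ∀ i j w, ‖f' i j w‖ ≤ θ)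
    -- server models (rows of W p) and client iterates within each epoch
    (W : ℕ → Matrix (Fin M) (Fin d) ℝ)
    (wc : ℕ → Fin M → Fin N → ℕ → EuclideanSpace ℝ (Fin d))
    (hwc0 : ∀ p i j, wc p i j 0 = mrow (W p) i)
    (hwcstep : ∀ p i j t, t < TC → wc p i j (t + 1) = wc p i j t - γ • f' i j (wc p i j t))
    -- aggregated client gradients per server
    (G : ℕ → Matrix (Fin M) (Fin d) ℝ)
    (hG : ∀ p i, mrow (G p) i =
      (N : ℝ)⁻¹ • ∑ j : Fin N, ∑ t ∈ Finset.range TC, f' i j (wc p i j t))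
    -- epoch update: client aggregation followed by T_S consensus steps
    (hup : ∀ p, W (p + 1) = A ^ TS * (W p - γ • G p))
    (J : Matrix (Fin M) (Fin M) ℝ) (hJ : J = Matrix.of fun _ _ => (M : ℝ)⁻¹)
    (σA : ℝ) (hσA : σA = specNorm (A ^ TS - J)) (hσlt : σA < 1) :
    ∀ (i : Fin M) (p : ℕ),
      ‖mrow (W p) i - (M : ℝ)⁻¹ • ∑ k : Fin M, mrow (W p) k‖ ≤
        σA ^ p * specNorm (W 0 - J * W 0) +
          Real.sqrt M * TC * θ * γ * σA / (1 - σA) := by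
  intro i p
  have hσ0 : 0 ≤ σA := by rw [hσA, specNorm_eq]; exact norm_nonneg _
  have h1σ : 0 < 1 - σA := by linarith
  have hMne : (M : ℝ) ≠ 0 := Nat.cast_ne_zero.mpr hM.ne'
  have hNne : (N : ℝ) ≠ 0 := Nat.cast_ne_zero.mpr hN.ne'
  have hSrow : ∀ a, ∑ j, (A ^ TS) a j = 1 := rowsum_pow A hrowsum TS
  have hScol : ∀ j, ∑ a, (A ^ TS) a j = 1 := colsum_pow A hcolsum TS
  have hJJ : J * J = J := by
    ext a b
    simp only [hJ, Matrix.mul_apply, Matrix.of_apply, Finset.sum_const, card_univ,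
      Fintype.card_fin, nsmul_eq_mul]
    field_simp
  have hSJ : A ^ TS * J = J := by
    ext a b
    simp only [hJ, Matrix.mul_apply, Matrix.of_apply, ← Finset.sum_mul, hSrow, one_mul]
  have hJS : J * A ^ TS = J := by
    ext a b
    simp only [hJ, Matrix.mul_apply, Matrix.of_apply, ← Finset.mul_sum, hScol, mul_one]
  set D : ℕ → Matrix (Fin M) (Fin d) ℝ := fun q => W q - J * W q with hD
  have hDrec : ∀ q, D (q + 1) = (A ^ TS - J) * D q - γ • ((A ^ TS - J) * G q) := by
    intro q
    show W (q+1) - J * W (q+1) = _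
    rw [hup q, ← Matrix.mul_assoc, hJS, ← Matrix.sub_mul, Matrix.mul_sub, Matrix.mul_smul]
    congr 1
    show _ = (A ^ TS - J) * (W q - J * W q)
    have hz : (A ^ TS - J) * J = 0 := by rw [Matrix.sub_mul, hSJ, hJJ, sub_self]
    rw [Matrix.mul_sub, ← Matrix.mul_assoc, hz, Matrix.zero_mul, sub_zero]
  have hGbd : ∀ q, specNorm (G q) ≤ Real.sqrt M * (TC * θ) := by
    intro q
    apply specNorm_le_of_rows _ _ (by positivity)
    intro a
    rw [hG q a, norm_smul, Real.norm_eq_abs, abs_of_nonneg (by positivity)]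
    have hbig : ‖∑ j : Fin N, ∑ t ∈ Finset.range TC, f' a j (wc q a j t)‖ ≤
        (N : ℝ) * (TC * θ) := by
      calc ‖∑ j : Fin N, ∑ t ∈ Finset.range TC, f' a j (wc q a j t)‖
          ≤ ∑ j : Fin N, ‖∑ t ∈ Finset.range TC, f' a j (wc q a j t)‖ := norm_sum_le _ _
        _ ≤ ∑ _j : Fin N, (TC : ℝ) * θ := by
            apply Finset.sum_le_sum
            intro j _
            calc ‖∑ t ∈ Finset.range TC, f' a j (wc q a j t)‖
                ≤ ∑ t ∈ Finset.range TC, ‖f' a j (wc q a j t)‖ := norm_sum_le _ _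
              _ ≤ ∑ _t ∈ Finset.range TC, θ :=
                  Finset.sum_le_sum fun t _ => hgradbd a j _
              _ = (TC : ℝ) * θ := by simp [mul_comm]
        _ = (N : ℝ) * ((TC : ℝ) * θ) := by simp [mul_comm, mul_assoc]
    calc (N : ℝ)⁻¹ * ‖∑ j : Fin N, ∑ t ∈ Finset.range TC, f' a j (wc q a j t)‖
        ≤ (N : ℝ)⁻¹ * ((N : ℝ) * (TC * θ)) := by
          apply mul_le_mul_of_nonneg_left hbig (by positivity)
      _ = (TC : ℝ) * θ := by field_simp
  have hσeq : ‖A ^ TS - J‖ = σA := by rw [hσA, specNorm_eq]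
  set C : ℝ := Real.sqrt M * TC * θ * γ with hC
  have hC0 : 0 ≤ C := by rw [hC]; positivity
  have hrec : ∀ q, specNorm (D (q + 1)) ≤ σA * specNorm (D q) + C * σA := by
    intro q
    rw [hDrec q, specNorm_eq]
    have t1 : ‖(A ^ TS - J) * D q‖ ≤ σA * ‖D q‖ := by
      rw [← hσeq]; exact Matrix.l2_opNorm_mul _ _
    have t2 : ‖γ • ((A ^ TS - J) * G q)‖ ≤ C * σA := by
      rw [norm_smul, Real.norm_eq_abs, abs_of_nonneg hγ]
      calc γ * ‖(A ^ TS - J) * G q‖ ≤ γ * (‖A ^ TS - J‖ * ‖G q‖) := by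
            apply mul_le_mul_of_nonneg_left (Matrix.l2_opNorm_mul _ _) hγ
        _ ≤ γ * (σA * (Real.sqrt M * (TC * θ))) := by
            rw [hσeq]
            apply mul_le_mul_of_nonneg_left _ hγ
            apply mul_le_mul_of_nonneg_left _ hσ0
            rw [← specNorm_eq]
            exact hGbd q
        _ = C * σA := by rw [hC]; ring
    calc ‖(A ^ TS - J) * D q - γ • ((A ^ TS - J) * G q)‖
        ≤ ‖(A ^ TS - J) * D q‖ + ‖γ • ((A ^ TS - J) * G q)‖ := norm_sub_le _ _
      _ ≤ σA * ‖D q‖ + C * σA := add_le_add t1 t2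
      _ = σA * specNorm (D q) + C * σA := by rw [specNorm_eq]
  have hbd : ∀ q, specNorm (D q) ≤ σA ^ q * specNorm (D 0) + C * σA / (1 - σA) := by
    intro q
    induction q with
    | zero =>
      have : 0 ≤ C * σA / (1 - σA) := by positivity
      simp only [pow_zero, one_mul]
      linarith
    | succ q ih =>
      have key : σA * (C * σA / (1 - σA)) + C * σA = C * σA / (1 - σA) := by
        field_simp
        ring
      calc specNorm (D (q + 1)) ≤ σA * specNorm (D q) + C * σA := hrec q
        _ ≤ σA * (σA ^ q * specNorm (D 0) + C * σA / (1 - σA)) + C * σA := by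
            apply add_le_add_left (mul_le_mul_of_nonneg_left ih hσ0)
        _ = σA ^ (q + 1) * specNorm (D 0) + (σA * (C * σA / (1 - σA)) + C * σA) := by
            ring
        _ = σA ^ (q + 1) * specNorm (D 0) + C * σA / (1 - σA) := by rw [key]
  have hr : mrow (W p) i - (M : ℝ)⁻¹ • ∑ k : Fin M, mrow (W p) k = mrow (D p) i := by
    have h1 : (J * W p) i = (M : ℝ)⁻¹ • ∑ k, W p k := by
      funext c
      simp only [Matrix.mul_apply, hJ, Matrix.of_apply, Pi.smul_apply, Finset.sum_apply,
        smul_eq_mul, Finset.mul_sum]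
      change _ = _ * (∑ k, (W p k : Fin d → ℝ)) c
      exact (Finset.mul_sum _ _ _).symm.trans
        (congrArg _ (Finset.sum_apply c Finset.univ (fun k => (W p k : Fin d → ℝ))).symm)
    have h2 : mrow (J * W p) i = (M : ℝ)⁻¹ • ∑ k : Fin M, mrow (W p) k := by
      rw [mrow, h1, WithLp.equiv_symm_apply, WithLp.toLp_smul]; congr 1
      exact equiv_symm_sum (fun k => W p k)
    show _ = mrow (W p - J * W p) i
    rw [mrow_sub, h2]
  rw [hr]
  have hfinal : specNorm (D p) ≤ σA ^ p * specNorm (W 0 - J * W 0) +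
      Real.sqrt M * TC * θ * γ * σA / (1 - σA) := by
    have := hbd p
    have hD0 : D 0 = W 0 - J * W 0 := rfl
    rw [hD0] at this
    calc specNorm (D p) ≤ σA ^ p * specNorm (W 0 - J * W 0) + C * σA / (1 - σA) := this
      _ = _ := by rw [hC]
  exact (mrow_le_specNorm _ _).trans hfinal
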